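/- Let Z : [0,1] → ℝ be continuous with Z(0) = Z(1), set Z_* := min_{[0,1]} Z, and assume Z attains its minimum at a unique point s_* ∈ [0,1]. Let t, t' ∈ [0,1] with Z(t) > Z_* and Z(t') > Z_*. Then there exists ε > 0 with ε ≤ min(Z(t), Z(t')) − Z_* such that for every u ∈ [0, ε], γ_t(Z(t) − Z_* − u) = γ_{t'}(Z(t') − Z_* − u); that is, any two simple geodesics merge before reaching their common endpoint s_*. -/

import Mathlib

/-- The cyclic interval `[s,t]` in `[0,1]`. -/
def cyclInt (s t : ℝ) : Set ℝ :=
  if s ≤ t then Set.Icc s t else Set.Icc s 1 ∪ Set.Icc 0 t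

/-- `D°(s,t) = Z(s) + Z(t) - 2 max( min_{[s,t]} Z, min_{[t,s]} Z )`. -/
noncomputable def Dcirc (Z : ℝ → ℝ) (s t : ℝ) : ℝ :=
  Z s + Z t - 2 * max (sInf (Z '' cyclInt s t)) (sInf (Z '' cyclInt t s))

/-- `D(s,t)`, the infimum over finite chains in `[0,1]` of sums of `D°`-increments. -/
noncomputable def Dmap (Z : ℝ → ℝ) (s t : ℝ) : ℝ :=
  sInf {x | ∃ k : ℕ, 1 ≤ k ∧ ∃ f : ℕ → ℝ,
    (∀ i ≤ k, f i ∈ Set.Icc (0:ℝ) 1) ∧ f 0 = s ∧ f k = t ∧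
    x = ∑ i ∈ Finset.range k, Dcirc Z (f i) (f (i + 1))}

/-- First candidate set in the definition of the simple geodesic:
points of `[t,1]` where `Z` equals `Z t - r`. -/
def gammaSetR (Z : ℝ → ℝ) (t r : ℝ) : Set ℝ :=
  {s | s ∈ Set.Icc t 1 ∧ Z s = Z t - r}

/-- Second candidate set: points of `[0,t]` where `Z` equals `Z t - r`. -/
def gammaSetL (Z : ℝ → ℝ) (t r : ℝ) : Set ℝ :=
  {s | s ∈ Set.Icc 0 t ∧ Z s = Z t - r}

open Classical in
/-- The simple geodesic `γ_t(r)`. -/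
noncomputable def gammaP (Z : ℝ → ℝ) (t r : ℝ) : ℝ :=
  if (gammaSetR Z t r).Nonempty then sInf (gammaSetR Z t r) else sInf (gammaSetL Z t r)

theorem simple_geodesics_merge
    (Z : ℝ → ℝ) (hcont : ContinuousOn Z (Set.Icc 0 1)) (hZ : Z 0 = Z 1)
    (sstar : ℝ) (hsstar : sstar ∈ Set.Icc (0:ℝ) 1)
    (hmin : Z sstar = sInf (Z '' Set.Icc (0:ℝ) 1))
    (huniq : ∀ s ∈ Set.Icc (0:ℝ) 1, Z s = sInf (Z '' Set.Icc (0:ℝ) 1) → s = sstar)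
    (t t' : ℝ) (ht : t ∈ Set.Icc (0:ℝ) 1) (ht' : t' ∈ Set.Icc (0:ℝ) 1)
    (hZt : sInf (Z '' Set.Icc (0:ℝ) 1) < Z t)
    (hZt' : sInf (Z '' Set.Icc (0:ℝ) 1) < Z t') :
    ∃ ε > 0, ε ≤ min (Z t) (Z t') - sInf (Z '' Set.Icc (0:ℝ) 1) ∧
      ∀ u ∈ Set.Icc (0:ℝ) ε,
        gammaP Z t (Z t - sInf (Z '' Set.Icc (0:ℝ) 1) - u) =
          gammaP Z t' (Z t' - sInf (Z '' Set.Icc (0:ℝ) 1) - u) := by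
  set Zs := sInf (Z '' Set.Icc (0:ℝ) 1) with hZsdef
  have hbdd : BddBelow (Z '' Set.Icc (0:ℝ) 1) :=
    (isCompact_Icc.image_of_continuousOn hcont).bddBelow
  have hle : ∀ s ∈ Set.Icc (0:ℝ) 1, Zs ≤ Z s := fun s hs => csInf_le hbdd ⟨s, hs, rfl⟩
  have h0mem : (0:ℝ) ∈ Set.Icc (0:ℝ) 1 := ⟨le_refl 0, zero_le_one⟩
  have h1mem : (1:ℝ) ∈ Set.Icc (0:ℝ) 1 := ⟨zero_le_one, le_refl 1⟩
  have hZ0 : Zs < Z 0 := by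
    rcases lt_or_eq_of_le (hle 0 h0mem) with h | h
    · exact h
    · exfalso
      have h0 : (0:ℝ) = sstar := huniq 0 h0mem h.symm
      have h1 : (1:ℝ) = sstar := huniq 1 h1mem (by rw [← hZ, h.symm])
      linarith [h0, h1]
  have hZ1 : Zs < Z 1 := hZ ▸ hZ0
  have hs0 : 0 < sstar := by
    rcases lt_or_eq_of_le hsstar.1 with h | h
    · exact h
    · exfalso; rw [← h] at hmin; linarith [hZ0, hmin]
  have hs1 : sstar < 1 := by
    rcases lt_or_eq_of_le hsstar.2 with h | h
    · exact h
    · exfalso; rw [h] at hmin; linarith [hZ1, hmin]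
  have htne : 0 < |t - sstar| := by
    rw [abs_pos, sub_ne_zero]
    intro h; rw [h] at hZt; linarith [hmin]
  have ht'ne : 0 < |t' - sstar| := by
    rw [abs_pos, sub_ne_zero]
    intro h; rw [h] at hZt'; linarith [hmin]
  set δ := min (min sstar (1 - sstar)) (min (|t - sstar|) (|t' - sstar|)) / 2 with hδdef
  have hδpos : 0 < δ := by
    apply div_pos _ two_pos
    exact lt_min (lt_min hs0 (by linarith)) (lt_min htne ht'ne)
  have hδs0 : δ < sstar := by
    have : δ ≤ sstar / 2 := by
      apply div_le_div_of_nonneg_right _ (by norm_num : (0:ℝ) ≤ 2)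
      exact le_trans (min_le_left _ _) (min_le_left _ _)
    linarith
  have hδs1 : sstar + δ < 1 := by
    have : δ ≤ (1 - sstar) / 2 := by
      apply div_le_div_of_nonneg_right _ (by norm_num : (0:ℝ) ≤ 2)
      exact le_trans (min_le_left _ _) (min_le_right _ _)
    linarith
  have hδt : δ < |t - sstar| := by
    have : δ ≤ |t - sstar| / 2 := by
      apply div_le_div_of_nonneg_right _ (by norm_num : (0:ℝ) ≤ 2)
      exact le_trans (min_le_right _ _) (min_le_left _ _)
    linarith
  have hδt' : δ < |t' - sstar| := by
    have : δ ≤ |t' - sstar| / 2 := by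
      apply div_le_div_of_nonneg_right _ (by norm_num : (0:ℝ) ≤ 2)
      exact le_trans (min_le_right _ _) (min_le_right _ _)
    linarith
  -- compact set away from sstar
  set K := Set.Icc (0:ℝ) 1 \ Set.Ioo (sstar - δ) (sstar + δ) with hKdef
  have hKcomp : IsCompact K := isCompact_Icc.diff isOpen_Ioo
  have hKne : K.Nonempty := ⟨0, h0mem, fun h => absurd h.1 (by push_neg; linarith)⟩
  obtain ⟨s0, hs0K, hs0min⟩ := hKcomp.exists_isMinOn hKne (hcont.mono Set.diff_subset)
  have hm : Zs < Z s0 := by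
    rcases lt_or_eq_of_le (hle s0 hs0K.1) with h | h
    · exact h
    · exfalso
      have := huniq s0 hs0K.1 h.symm
      exact hs0K.2 (this ▸ ⟨by linarith, by linarith⟩)
  -- the epsilon
  refine ⟨min (Z s0 - Zs) (min (Z t) (Z t') - Zs) / 2, ?_, ?_, ?_⟩
  · apply div_pos _ two_pos
    exact lt_min (by linarith) (by exact sub_pos.mpr (lt_min hZt hZt'))
  · have h1 : 0 < min (Z t) (Z t') - Zs := sub_pos.mpr (lt_min hZt hZt')
    have := min_le_right (Z s0 - Zs) (min (Z t) (Z t') - Zs)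
    linarith
  · intro u hu
    set ε := min (Z s0 - Zs) (min (Z t) (Z t') - Zs) / 2 with hεdef
    have huU : u < Z s0 - Zs := by
      have h1 := hu.2
      have h2 : ε ≤ (Z s0 - Zs) / 2 :=
        div_le_div_of_nonneg_right (min_le_left _ _) (by norm_num : (0:ℝ) ≤ 2)
      linarith
    have huT : u < min (Z t) (Z t') - Zs := by
      have h1 := hu.2
      have h2 : ε ≤ (min (Z t) (Z t') - Zs) / 2 :=
        div_le_div_of_nonneg_right (min_le_right _ _) (by norm_num : (0:ℝ) ≤ 2)
      have h3 : 0 < min (Z t) (Z t') - Zs := sub_pos.mpr (lt_min hZt hZt')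
      linarith
    set ℓ := Zs + u with hℓdef
    -- the level set is near sstar
    have hA : ∀ s ∈ Set.Icc (0:ℝ) 1, Z s = ℓ → sstar - δ < s ∧ s < sstar + δ := by
      intro s hs hZsl
      by_contra hcon
      have hsK : s ∈ K := ⟨hs, fun hIoo => hcon ⟨hIoo.1, hIoo.2⟩⟩
      have h2 : Z s0 ≤ Z s := hs0min hsK
      simp only [hℓdef] at hZsl
      linarith
    -- the global level set S
    set S := {s | s ∈ Set.Icc (0:ℝ) 1 ∧ Z s = ℓ} with hSdef
    have hSne : S.Nonempty := by
      have hZs0le : Z s0 ≤ Z 0 := hs0min ⟨h0mem, fun h => absurd h.1 (by push_neg; linarith)⟩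
      have hℓmem : ℓ ∈ Set.Icc (Z sstar) (Z 0) := by
        constructor
        · rw [hmin]; linarith [hu.1]
        · linarith
      obtain ⟨s, hs, hZseq⟩ := intermediate_value_Icc' (le_of_lt hs0) 
        (hcont.mono (Set.Icc_subset_Icc (le_refl 0) (by linarith))) hℓmem
      exact ⟨s, ⟨hs.1, le_trans hs.2 (by linarith)⟩, hZseq⟩
    have hSclosed : IsClosed S := by
      have : S = Set.Icc (0:ℝ) 1 ∩ Z ⁻¹' {ℓ} := by
        ext s; exact Iff.rfl
      rw [this]
      exact hcont.preimage_isClosed_of_isClosed isClosed_Icc isClosed_singleton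
    have hSbdd : BddBelow S := ⟨0, fun s hs => hs.1.1⟩
    have hSmem : sInf S ∈ S := hSclosed.csInf_mem hSne hSbdd
    -- the key computation for each τ
    have key : ∀ τ ∈ Set.Icc (0:ℝ) 1, Zs < Z τ → δ < |τ - sstar| →
        gammaP Z τ (Z τ - Zs - u) = sInf S := by
      intro τ hτ hZτ hδτ
      have hZτr : Z τ - (Z τ - Zs - u) = ℓ := by ring
      rcases lt_or_ge τ sstar with hτlt | hτle
      · -- τ < sstar - δ : right set equals S
        have hτδ : τ < sstar - δ := by
          rw [abs_of_neg (by linarith)] at hδτ; linarith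
        have hR : gammaSetR Z τ (Z τ - Zs - u) = S := by
          ext s
          simp only [gammaSetR, Set.mem_setOf_eq, hSdef, hZτr]
          constructor
          · rintro ⟨⟨h1, h2⟩, h3⟩
            exact ⟨⟨le_trans hτ.1 h1, h2⟩, h3⟩
          · rintro ⟨hs, h3⟩
            have := hA s hs h3
            exact ⟨⟨by linarith [this.1], hs.2⟩, h3⟩
        rw [gammaP, if_pos (hR ▸ hSne), hR]
      · -- sstar < τ, indeed sstar + δ < τ : right set empty, left set equals S
        have hτgt : sstar < τ := by
          rcases lt_or_eq_of_le hτle with h | h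
          · exact h
          · exfalso; rw [← h] at hδτ; simp at hδτ; linarith
        have hτδ : sstar + δ < τ := by
          rw [abs_of_pos (by linarith)] at hδτ; linarith
        have hR : gammaSetR Z τ (Z τ - Zs - u) = ∅ := by
          ext s
          simp only [gammaSetR, Set.mem_setOf_eq, Set.mem_empty_iff_false, iff_false,
            not_and, hZτr]
          rintro ⟨h1, h2⟩ h3
          have := hA s ⟨le_trans hτ.1 h1, h2⟩ h3
          linarith [this.2]
        have hL : gammaSetL Z τ (Z τ - Zs - u) = S := by
          ext s
          simp only [gammaSetL, Set.mem_setOf_eq, hSdef, hZτr]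
          constructor
          · rintro ⟨⟨h1, h2⟩, h3⟩
            exact ⟨⟨h1, le_trans h2 hτ.2⟩, h3⟩
          · rintro ⟨hs, h3⟩
            have := hA s hs h3
            exact ⟨⟨hs.1, by linarith [this.2]⟩, h3⟩
        rw [gammaP, if_neg (by rw [hR]; exact Set.not_nonempty_empty), hL]
    rw [key t ht hZt hδt, key t' ht' hZt' hδt']
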